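/- arXiv:1612.05423 — 3 statements merged into one kernel-verified Lean document; each statement's English description precedes it below -/
import Mathlib

section
/- For all k ≥ 1, in the ring R: G_{k_d} − G_{k_c} = E_{k_d}, and E_{k_d} = d q^k (E_{k_c} + E_{k_a} + G_{(k−1)_c}). -/
open Finset PowerSeries

namespace Primc

/-- Colours: `0 = a`, `1 = b`, `2 = c`, `3 = d`. -/
abbrev Colour := Fin 4

/-- A coloured part `k_z`: an underlying integer `k` together with its colour `z`. -/
abbrev CPart := ℕ × Colour

/-- The matrix `D` of minimal differences, with rows and columns indexed by the colours
`a, b, c, d` in this order. -/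
def Dmat : Colour → Colour → ℕ := ![![2,1,2,2], ![1,0,1,1], ![0,1,0,2], ![0,1,0,2]]

/-- The position of a coloured part in the total order
`1_a < 1_b < 1_c < 1_d < 2_a < 2_b < 2_c < 2_d < ⋯`. -/
def pos (p : CPart) : ℕ := 4 * p.1 + (p.2 : ℕ)

/-- A Primc partition: a finite sequence of coloured positive integers, non-increasing in the
above total order, in which consecutive parts `λ_i, λ_{i+1}` of colours `x, y` satisfy
`λ_i − λ_{i+1} ≥ D(x,y)`. -/
def IsPrimc (l : List CPart) : Prop :=
  (∀ p ∈ l, 1 ≤ p.1) ∧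
  l.Chain' fun p r => pos r ≤ pos p ∧ r.1 + Dmat p.2 r.2 ≤ p.1

/-- The weight of a coloured partition: the sum of the underlying integers of its parts. -/
def wt (l : List CPart) : ℕ := (l.map Prod.fst).sum

/-- The number of parts of colour `z`. -/
def nc (l : List CPart) (z : Colour) : ℕ := l.countP fun p => p.2 == z

/-- `R₀ = ℤ[a,c,d]`, with `a = X 0`, `c = X 1`, `d = X 2`. -/
abbrev R0 := MvPolynomial (Fin 3) ℤ

/-- `R = ℤ[a,c,d][[q]]`. -/
abbrev R := PowerSeries R0

/-- The variable `q`. -/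
noncomputable def qq : R := PowerSeries.X

/-- The variable `a`. -/
noncomputable def av : R0 := MvPolynomial.X 0

/-- The variable `c`. -/
noncomputable def cv : R0 := MvPolynomial.X 1

/-- The variable `d`. -/
noncomputable def dv : R0 := MvPolynomial.X 2

/-- The monomial `a^{#(a-parts)} c^{#(c-parts)} d^{#(d-parts)}` attached to a coloured
partition. -/
noncomputable def mono (l : List CPart) : R0 := av ^ nc l 0 * cv ^ nc l 2 * dv ^ nc l 3

/-- The infinite product `∏_{j ≥ 0} f j`, defined coefficientwise: the coefficient of `qⁿ` is
the corresponding coefficient of the partial product `∏_{j ≤ n} f j`.  This agrees with the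
usual (coefficientwise convergent) infinite product whenever the factor `f j` is `≡ 1`
modulo `q^{j+1}`, as is the case for all products appearing here. -/
noncomputable def iprod (f : ℕ → R) : R :=
  PowerSeries.mk fun n => PowerSeries.coeff n (∏ j ∈ Finset.range (n + 1), f j)

/-- The largest part of a Primc partition (its parts being written in non-increasing order),
with the convention that the empty partition has largest part `0_b`. -/
def top (l : List CPart) : CPart := l.headD (0, 1)

/-- `G_{k_x} ∈ R`: the sum of `q^{|λ|} a^{#(a-parts)} c^{#(c-parts)} d^{#(d-parts)}` over all
Primc partitions `λ` whose largest part is at most `k_x` in the colour order. -/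
noncomputable def G (k : ℕ) (x : Colour) : R :=
  PowerSeries.mk fun n =>
    ∑ᶠ lam : {l : List CPart // IsPrimc l ∧ wt l = n ∧ pos (top l) ≤ pos (k, x)}, mono lam.1

/-- `E_{k_x} ∈ R`: the sum of `q^{|λ|} a^{#(a-parts)} c^{#(c-parts)} d^{#(d-parts)}` over all
Primc partitions `λ` whose largest part is exactly `k_x` (so `E_{0_b} = 1`, the empty
partition having largest part `0_b` by convention). -/
noncomputable def E (k : ℕ) (x : Colour) : R :=
  PowerSeries.mk fun n =>
    ∑ᶠ lam : {l : List CPart // IsPrimc l ∧ wt l = n ∧ top l = (k, x)}, mono lam.1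

-- helpers
lemma length_le_sum (l : List ℕ) (h : ∀ x ∈ l, 1 ≤ x) : l.length ≤ l.sum := by
  induction l with
  | nil => simp
  | cons a t ih =>
    simp only [List.length_cons, List.sum_cons]
    have := h a (by simp)
    have := ih (fun x hx => h x (by simp [hx]))
    omega

lemma finite_lists {α : Type*} {s : Set α} (hs : s.Finite) (n : ℕ) :
    {l : List α | (∀ p ∈ l, p ∈ s) ∧ l.length ≤ n}.Finite := by
  have : Finite s := hs.to_subtype
  have h := List.finite_length_le (↥s) n
  refine (h.image (List.map (Subtype.val : s → α))).subset ?_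
  intro l hl
  refine ⟨l.attach.map (fun p => ⟨p.1, hl.1 p.1 p.2⟩), by simpa using hl.2, ?_⟩
  simp [List.map_map]

lemma finite_primc (n : ℕ) (P : List CPart → Prop) :
    {l : List CPart | IsPrimc l ∧ wt l = n ∧ P l}.Finite := by
  refine (finite_lists (s := (Set.Iic n ×ˢ (Set.univ : Set Colour)))
    ((Set.finite_Iic n).prod Set.finite_univ) n).subset ?_
  rintro l ⟨⟨h1, _⟩, hw, _⟩
  rw [wt] at hw
  constructor
  · intro p hp
    refine ⟨?_, Set.mem_univ _⟩
    have hm : p.1 ∈ l.map Prod.fst := List.mem_map_of_mem hp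
    have := List.single_le_sum (l := l.map Prod.fst) (by intro x _; omega) _ hm
    simp only [Set.mem_Iic]; omega
  · have := length_le_sum (l.map Prod.fst) (by
      intro x hx
      obtain ⟨p, hp, rfl⟩ := List.mem_map.1 hx
      exact h1 p hp)
    simpa [hw] using this.trans_eq hw


def SG (n k : ℕ) (x : Colour) : Set (List CPart) :=
  {l | IsPrimc l ∧ wt l = n ∧ pos (top l) ≤ pos (k, x)}

def SE (n k : ℕ) (x : Colour) : Set (List CPart) :=
  {l | IsPrimc l ∧ wt l = n ∧ top l = (k, x)}

lemma SG_finite (n k : ℕ) (x : Colour) : (SG n k x).Finite := finite_primc n _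
lemma SE_finite (n k : ℕ) (x : Colour) : (SE n k x).Finite := finite_primc n _

lemma coeff_G (n k : ℕ) (x : Colour) :
    PowerSeries.coeff n (G k x) = ∑ᶠ l ∈ SG n k x, mono l := by
  rw [G, PowerSeries.coeff_mk,
    finsum_subtype_eq_finsum_cond (fun l => IsPrimc l ∧ wt l = n ∧ pos (top l) ≤ pos (k, x))]
  rfl

lemma coeff_E (n k : ℕ) (x : Colour) :
    PowerSeries.coeff n (E k x) = ∑ᶠ l ∈ SE n k x, mono l := by
  rw [E, PowerSeries.coeff_mk,
    finsum_subtype_eq_finsum_cond (fun l => IsPrimc l ∧ wt l = n ∧ top l = (k, x))]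
  rfl

lemma pos_eq (m : ℕ) (z : Colour) : pos (m, z) = 4 * m + (z : ℕ) := rfl

lemma pos_inj {p r : CPart} (h : pos p = pos r) : p = r := by
  obtain ⟨m, z⟩ := p; obtain ⟨m', z'⟩ := r
  have hz := z.isLt; have hz' := z'.isLt
  simp only [pos_eq] at h
  have h1 : m = m' := by omega
  have h2 : (z : ℕ) = (z' : ℕ) := by omega
  exact Prod.ext h1 (Fin.ext h2)

lemma SG_split (n k : ℕ) : SG n k 3 = SE n k 3 ∪ SG n k 2 := by
  ext l
  simp only [SG, SE, Set.mem_setOf_eq, Set.mem_union]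
  constructor
  · rintro ⟨h1, h2, h3⟩
    by_cases h : top l = (k, 3)
    · exact Or.inl ⟨h1, h2, h⟩
    · refine Or.inr ⟨h1, h2, ?_⟩
      generalize htl : top l = t at h3 h
      obtain ⟨m, z⟩ := t
      have hz := z.isLt
      have hne : pos (m, z) ≠ pos (k, (3 : Colour)) := fun he => h (pos_inj he)
      simp only [pos_eq, show ((3 : Colour) : ℕ) = 3 from rfl,
        show ((2 : Colour) : ℕ) = 2 from rfl] at h3 hne ⊢
      omega
  · rintro (⟨h1, h2, h3⟩ | ⟨h1, h2, h3⟩)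
    · exact ⟨h1, h2, le_of_eq (congrArg pos h3)⟩
    · refine ⟨h1, h2, h3.trans ?_⟩
      simp only [pos_eq, show ((3 : Colour) : ℕ) = 3 from rfl,
        show ((2 : Colour) : ℕ) = 2 from rfl]
      omega

lemma mono_cons (p : CPart) (t : List CPart) (hp : p.2 = 3) :
    mono (p :: t) = dv * mono t := by
  simp only [mono, nc, List.countP_cons, hp]
  norm_num [show ((3:Colour) == (0:Colour)) = false from rfl,
    show ((3:Colour) == (2:Colour)) = false from rfl,
    show ((3:Colour) == (3:Colour)) = true from rfl]
  ring

lemma finsum_mem_mul_left {s : Set (List CPart)} (hs : s.Finite) (c : R0)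
    (f : List CPart → R0) : ∑ᶠ l ∈ s, c * f l = c * ∑ᶠ l ∈ s, f l := by
  rw [← hs.coe_toFinset, finsum_mem_coe_finset, finsum_mem_coe_finset, Finset.mul_sum]


lemma part1 (k : ℕ) : G k 3 - G k 2 = E k 3 := by
  rw [sub_eq_iff_eq_add]
  ext n
  rw [map_add, coeff_G, coeff_G, coeff_E, SG_split,
    finsum_mem_union ?disj (SE_finite n k 3) (SG_finite n k 2)]
  case disj =>
    rw [Set.disjoint_left]
    rintro l ⟨_, _, h3⟩ ⟨_, _, h3'⟩
    rw [h3] at h3'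
    simp only [pos_eq, show ((3 : Colour) : ℕ) = 3 from rfl,
      show ((2 : Colour) : ℕ) = 2 from rfl] at h3'
    omega

lemma Dmat3_eval (z : Colour) :
    Dmat 3 z = if (z : ℕ) = 1 then 1 else if (z : ℕ) = 3 then 2 else 0 := by
  fin_cases z <;> rfl

lemma c0 : ((0 : Colour) : ℕ) = 0 := rfl
lemma c1 : ((1 : Colour) : ℕ) = 1 := rfl
lemma c2 : ((2 : Colour) : ℕ) = 2 := rfl
lemma c3 : ((3 : Colour) : ℕ) = 3 := rfl

lemma SE3_eq (k n : ℕ) (hk : 1 ≤ k) (hn : k ≤ n) :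
    SE n k 3 = (fun t => ((k, (3 : Colour)) :: t)) ''
      ((SE (n - k) k 2 ∪ SE (n - k) k 0) ∪ SG (n - k) (k - 1) 2) := by
  ext l
  simp only [SE, SG, Set.mem_setOf_eq, Set.mem_image, Set.mem_union]
  constructor
  · rintro ⟨⟨hp, hch⟩, hw, ht⟩
    cases l with
    | nil =>
      exfalso
      have h : ((0 : ℕ), (1 : Colour)) = ((k, (3 : Colour)) : CPart) := ht
      exact (by decide : ((1 : Colour) ≠ 3)) (congrArg Prod.snd h)
    | cons p t =>
      have hpt : p = (k, (3 : Colour)) := ht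
      subst hpt
      refine ⟨t, ?_, rfl⟩
      have hw' : wt t = n - k := by
        simp only [wt, List.map_cons, List.sum_cons] at hw ⊢; omega
      replace hch := List.isChain_cons.1 hch
      have hprim : IsPrimc t := ⟨fun r hr => hp _ (List.mem_cons_of_mem _ hr), hch.2⟩
      cases t with
      | nil =>
        refine Or.inr ⟨hprim, hw', ?_⟩
        show pos ((0 : ℕ), (1 : Colour)) ≤ pos (k - 1, 2)
        simp only [pos_eq, c1, c2]
        omega
      | cons r t' =>
        have hhd := hch.1 r rfl
        simp only [Prod.snd, Prod.fst, Dmat3_eval] at hhd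
        obtain ⟨hr1, hr2⟩ := hhd
        by_cases h2 : r = ((k, (2 : Colour)) : CPart)
        · exact Or.inl (Or.inl ⟨hprim, hw', h2⟩)
        by_cases h0 : r = ((k, (0 : Colour)) : CPart)
        · exact Or.inl (Or.inr ⟨hprim, hw', h0⟩)
        refine Or.inr ⟨hprim, hw', ?_⟩
        show pos r ≤ pos (k - 1, 2)
        have hne2 : pos r ≠ pos ((k, (2 : Colour)) : CPart) := fun h => h2 (pos_inj h)
        have hne0 : pos r ≠ pos ((k, (0 : Colour)) : CPart) := fun h => h0 (pos_inj h)
        obtain ⟨m, z⟩ := r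
        have hz := z.isLt
        simp only [Prod.fst, Prod.snd] at hr2
        simp only [pos_eq, c0, c2, c3] at hr1 hne2 hne0 ⊢
        split_ifs at hr2 <;> omega
  · rintro ⟨t, hmem, rfl⟩
    have hhead : ∀ r : CPart, t.head? = some r →
        pos r ≤ pos (k, (3 : Colour)) ∧ r.1 + Dmat 3 r.2 ≤ k := by
      intro r hr
      have htop : top t = r := by cases t with
        | nil => simp at hr
        | cons a t' => simp at hr; simp [top, hr]
      obtain (⟨_, _, ht⟩ | ⟨_, _, ht⟩) | ⟨_, _, ht⟩ := hmem
      · rw [htop] at ht; subst ht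
        constructor
        · simp only [pos_eq, c2, c3]; omega
        · simp only [Prod.fst, Prod.snd, Dmat3_eval, c2]; norm_num
      · rw [htop] at ht; subst ht
        constructor
        · simp only [pos_eq, c0, c3]; omega
        · simp only [Prod.fst, Prod.snd, Dmat3_eval, c0]; norm_num
      · rw [htop] at ht
        rw [Dmat3_eval]
        obtain ⟨m, z⟩ := r
        have hz := z.isLt
        simp only [pos_eq, c2, c3, Prod.fst, Prod.snd] at ht ⊢
        split_ifs <;> omega
    have hprim : IsPrimc t := by
      obtain (⟨h, _, _⟩ | ⟨h, _, _⟩) | ⟨h, _, _⟩ := hmem <;> exact h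
    have hwt : wt t = n - k := by
      obtain (⟨_, h, _⟩ | ⟨_, h, _⟩) | ⟨_, h, _⟩ := hmem <;> exact h
    refine ⟨⟨?_, ?_⟩, ?_, rfl⟩
    · intro p hpl
      rcases List.mem_cons.1 hpl with rfl | h
      · exact hk
      · exact hprim.1 p h
    · refine List.isChain_cons.2 ?_
      exact ⟨fun y hy => hhead y hy, hprim.2⟩
    · simp only [wt, List.map_cons, List.sum_cons]
      rw [wt] at hwt
      omega

lemma SE3_empty (k n : ℕ) (hn : n < k) : SE n k 3 = ∅ := by
  ext l
  simp only [SE, Set.mem_setOf_eq, Set.mem_empty_iff_false, iff_false]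
  rintro ⟨_, hw, ht⟩
  cases l with
  | nil =>
    have h : ((0 : ℕ), (1 : Colour)) = ((k, (3 : Colour)) : CPart) := ht
    exact (by decide : ((1 : Colour) ≠ 3)) (congrArg Prod.snd h)
  | cons p t =>
    have hpt : p = (k, (3 : Colour)) := ht
    subst hpt
    simp only [wt, List.map_cons, List.sum_cons] at hw
    omega

lemma disj1 (m k : ℕ) : Disjoint (SE m k 2) (SE m k 0) := by
  rw [Set.disjoint_left]
  rintro l ⟨_, _, h⟩ ⟨_, _, h'⟩
  rw [h] at h'
  exact (by decide : ((2 : Colour) ≠ 0)) (congrArg Prod.snd h')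

lemma disj2 (m k : ℕ) (hk : 1 ≤ k) :
    Disjoint (SE m k 2 ∪ SE m k 0) (SG m (k - 1) 2) := by
  rw [Set.disjoint_left]
  rintro l (⟨_, _, h⟩ | ⟨_, _, h⟩) ⟨_, _, h'⟩ <;> rw [h] at h' <;>
    simp only [pos_eq, show ((2 : Colour) : ℕ) = 2 from rfl,
      show ((0 : Colour) : ℕ) = 0 from rfl] at h' <;> omega

lemma part2 (k : ℕ) (hk : 1 ≤ k) :
    E k 3 = PowerSeries.C dv * qq ^ k * (E k 2 + E k 0 + G (k - 1) 2) := by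
  ext n
  have hrhs : PowerSeries.coeff n
        (PowerSeries.C dv * qq ^ k * (E k 2 + E k 0 + G (k - 1) 2))
      = dv * (if k ≤ n then
          PowerSeries.coeff (n - k) (E k 2 + E k 0 + G (k - 1) 2) else 0) := by
    rw [show PowerSeries.C dv * qq ^ k * (E k 2 + E k 0 + G (k - 1) 2)
        = PowerSeries.C dv * ((E k 2 + E k 0 + G (k - 1) 2) * qq ^ k) by ring,
      qq, PowerSeries.coeff_C_mul, PowerSeries.coeff_mul_X_pow']
  rw [hrhs, coeff_E]
  by_cases hn : k ≤ n
  · rw [if_pos hn, SE3_eq k n hk hn,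
      finsum_mem_image (fun x _ y _ h => List.cons_injective h),
      finsum_mem_congr rfl (fun t _ => mono_cons (k, (3 : Colour)) t rfl),
      finsum_mem_mul_left (((SE_finite _ k 2).union (SE_finite _ k 0)).union
        (SG_finite _ (k - 1) 2)) dv mono]
    congr 1
    rw [map_add, map_add, coeff_E, coeff_E, coeff_G,
      finsum_mem_union (disj2 (n - k) k hk)
        ((SE_finite _ k 2).union (SE_finite _ k 0)) (SG_finite _ (k - 1) 2),
      finsum_mem_union (disj1 (n - k) k) (SE_finite _ k 2) (SE_finite _ k 0)]
  · rw [if_neg hn, SE3_empty k n (by omega), finsum_mem_empty, mul_zero]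


/-- Equation (2.1a): for all `k ≥ 1`, `G_{k_d} − G_{k_c} = E_{k_d}` and
`E_{k_d} = d q^k (E_{k_c} + E_{k_a} + G_{(k−1)_c})` in `R`. -/
theorem statement8 (k : ℕ) (hk : 1 ≤ k) :
    G k 3 - G k 2 = E k 3 ∧
    E k 3 = PowerSeries.C dv * qq ^ k * (E k 2 + E k 0 + G (k - 1) 2) := by
  exact ⟨part1 k, part2 k hk⟩

end Primc
end

section
/- For all k ≥ 0, in the ring R: d · E_{k_c} = c · E_{k_d}. -/
open Finset PowerSeries

namespace Primc

lemma head_cond (k : ℕ) (r : CPart) :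
    (pos r ≤ pos (k,(2:Colour)) ∧ r.1 + Dmat 2 r.2 ≤ k) ↔
    (pos r ≤ pos (k,(3:Colour)) ∧ r.1 + Dmat 3 r.2 ≤ k) := by
  obtain ⟨m, x⟩ := r
  have hD : Dmat 2 x = Dmat 3 x := by fin_cases x <;> rfl
  have hx : (x:ℕ) < 4 := x.isLt
  simp only [pos]
  have c2 : (((2:Colour)):ℕ) = 2 := rfl
  have c3 : (((3:Colour)):ℕ) = 3 := rfl
  rw [c2, c3]
  constructor
  · rintro ⟨h1, h2⟩
    rw [hD] at h2
    exact ⟨by omega, h2⟩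
  · rintro ⟨h1, h2⟩
    refine ⟨?_, by rw [hD]; exact h2⟩
    by_cases hx3 : x = 3
    · subst hx3
      have : Dmat 3 3 = 2 := rfl
      rw [this] at h2
      omega
    · have : (x:ℕ) ≠ 3 := fun h => hx3 (Fin.ext (by rw [h]; rfl))
      omega

lemma primc_swap (k : ℕ) (t : List CPart) :
    IsPrimc ((k,(2:Colour))::t) ↔ IsPrimc ((k,(3:Colour))::t) := by
  unfold IsPrimc
  unfold List.Chain'
  rw [List.isChain_cons, List.isChain_cons]
  have hmem : ∀ y : Colour, (∀ p ∈ ((k,y)::t), 1 ≤ p.1) ↔ (1 ≤ k ∧ ∀ p ∈ t, 1 ≤ p.1) := by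
    intro y; simp
  rw [hmem, hmem]
  constructor <;> rintro ⟨h1, h2, h3⟩
  · exact ⟨h1, fun r hr => (head_cond k r).1 (h2 r hr), h3⟩
  · exact ⟨h1, fun r hr => (head_cond k r).2 (h2 r hr), h3⟩

lemma eq_cons_of_top {l : List CPart} {k : ℕ} {x : Colour} (hx : x ≠ 1)
    (h : top l = (k, x)) : l = (k, x) :: l.tail := by
  cases l with
  | nil => exfalso; apply hx; simp [top] at h; exact h.2.symm
  | cons p t => simp [top] at h; simp [h]

lemma mono_swap (k : ℕ) (t : List CPart) :
    dv * mono ((k,(2:Colour))::t) = cv * mono ((k,(3:Colour))::t) := by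
  simp [mono, nc, List.countP_cons]
  ring

lemma mono_ne_zero (l : List CPart) : mono l ≠ 0 := by
  unfold mono
  exact mul_ne_zero (mul_ne_zero (pow_ne_zero _ (MvPolynomial.X_ne_zero _))
    (pow_ne_zero _ (MvPolynomial.X_ne_zero _))) (pow_ne_zero _ (MvPolynomial.X_ne_zero _))

noncomputable def esw (k n : ℕ) :
    {l : List CPart // IsPrimc l ∧ wt l = n ∧ top l = (k, (2:Colour))} ≃
    {l : List CPart // IsPrimc l ∧ wt l = n ∧ top l = (k, (3:Colour))} where
  toFun := fun ⟨l, hp, hw, ht⟩ =>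
    ⟨(k, 3) :: l.tail, by
      have hl := eq_cons_of_top (by decide) ht
      refine ⟨(primc_swap k l.tail).1 (hl ▸ hp), ?_, rfl⟩
      rw [hl] at hw; simpa [wt] using hw⟩
  invFun := fun ⟨l, hp, hw, ht⟩ =>
    ⟨(k, 2) :: l.tail, by
      have hl := eq_cons_of_top (by decide) ht
      refine ⟨(primc_swap k l.tail).2 (hl ▸ hp), ?_, rfl⟩
      rw [hl] at hw; simpa [wt] using hw⟩
  left_inv := fun ⟨l, hp, hw, ht⟩ => by
    have hl := eq_cons_of_top (by decide) ht
    exact Subtype.ext (by simp; exact hl.symm)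
  right_inv := fun ⟨l, hp, hw, ht⟩ => by
    have hl := eq_cons_of_top (by decide) ht
    exact Subtype.ext (by simp; exact hl.symm)

theorem statement12' (k : ℕ) :
    PowerSeries.C dv * (PowerSeries.mk fun n =>
      ∑ᶠ lam : {l : List CPart // IsPrimc l ∧ wt l = n ∧ top l = (k, (2:Colour))}, mono lam.1)
    = PowerSeries.C cv * (PowerSeries.mk fun n =>
      ∑ᶠ lam : {l : List CPart // IsPrimc l ∧ wt l = n ∧ top l = (k, (3:Colour))}, mono lam.1) := by
  refine PowerSeries.ext fun n => ?_
  simp only [PowerSeries.coeff_C_mul, PowerSeries.coeff_mk]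
  set T2 := {l : List CPart // IsPrimc l ∧ wt l = n ∧ top l = (k, (2:Colour))}
  set T3 := {l : List CPart // IsPrimc l ∧ wt l = n ∧ top l = (k, (3:Colour))}
  have key : ∀ lam : T2, dv * mono lam.1 = cv * mono ((esw k n lam).1) := by
    rintro ⟨l, hp, hw, ht⟩
    have hl := eq_cons_of_top (by decide) ht
    show dv * mono l = cv * mono ((k, 3) :: l.tail)
    conv_lhs => rw [hl]
    exact mono_swap k l.tail
  cases finite_or_infinite T2 with
  | inl h =>
    haveI : Finite T3 := Finite.of_equiv T2 (esw k n)
    haveI := Fintype.ofFinite T2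
    haveI := Fintype.ofFinite T3
    rw [finsum_eq_sum_of_fintype, finsum_eq_sum_of_fintype, Finset.mul_sum, Finset.mul_sum]
    rw [← Equiv.sum_comp (esw k n) (fun lam => cv * mono lam.1)]
    exact Finset.sum_congr rfl fun lam _ => key lam
  | inr h =>
    haveI : Infinite T3 := Infinite.of_injective _ (esw k n).injective
    rw [finsum_of_infinite_support, finsum_of_infinite_support, mul_zero, mul_zero] <;>
      exact Set.infinite_univ.mono fun lam _ => mono_ne_zero _

/-- For all `k ≥ 0`, `d · E_{k_c} = c · E_{k_d}` in `R`. -/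
theorem statement12 (k : ℕ) :
    PowerSeries.C dv * E k 2 = PowerSeries.C cv * E k 3 := by
  exact statement12' k

end Primc
end

section
/- For each δ ∈ {0, 1}, as an identity of formal power series in ℤ[[q]]: ∑_{i ≥ 0} q^{\binom{2i+δ}{2}} / (q;q)_{2i+δ} = (−q;q)_∞. (The sum converges in ℤ[[q]] since the exponent \binom{2i+δ}{2} tends to infinity with i, and each (q;q)_{2i+δ} is invertible since it has constant term 1.) -/
open Finset PowerSeries

namespace EulerSum

/-- `(q;q)_n = ∏_{j=0}^{n−1} (1 − q^{j+1}) ∈ ℤ[[q]]`. -/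
noncomputable def poch (n : ℕ) : PowerSeries ℤ :=
  ∏ j ∈ Finset.range n, (1 - PowerSeries.X ^ (j + 1))

/-- The infinite series `∑_{i ≥ 0} q^{binom(2i+δ,2)} / (q;q)_{2i+δ}`, defined
coefficientwise: since the `i`-th term has `q`-order `binom(2i+δ,2) ≥ i`, only the terms with
`i ≤ m` can contribute to the coefficient of `qᵐ`, so that coefficient is the corresponding
coefficient of the partial sum `∑_{i ≤ m}`.  Each `(q;q)_{2i+δ}` has constant term `1`, hence
is invertible in `ℤ[[q]]`, its inverse given by `Ring.inverse`. -/
noncomputable def lhs (δ : ℕ) : PowerSeries ℤ :=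
  PowerSeries.mk fun m => PowerSeries.coeff m
    (∑ i ∈ Finset.range (m + 1),
      PowerSeries.X ^ Nat.choose (2 * i + δ) 2 * Ring.inverse (poch (2 * i + δ)))

/-- The infinite product `(−q;q)_∞ = ∏_{j ≥ 0} (1 + q^{j+1})`, defined coefficientwise: the
factor `1 + q^{j+1}` is `≡ 1` modulo `q^{j+1}`, so the coefficient of `qⁿ` is the
corresponding coefficient of the partial product `∏_{j ≤ n}`. -/
noncomputable def rhs : PowerSeries ℤ :=
  PowerSeries.mk fun n => PowerSeries.coeff n
    (∏ j ∈ Finset.range (n + 1), (1 + PowerSeries.X ^ (j + 1)))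

lemma isUnit_poch (n : ℕ) : IsUnit (poch n) := by
  rw [PowerSeries.isUnit_iff_constantCoeff]
  have : PowerSeries.constantCoeff (poch n) = 1 := by
    simp [poch, map_prod]
  rw [this]; exact isUnit_one

lemma poch_succ (n : ℕ) : poch (n + 1) = poch n * (1 - X ^ (n + 1)) :=
  Finset.prod_range_succ _ _

lemma inv_poch_succ (n : ℕ) :
    (1 - X ^ (n + 1)) * Ring.inverse (poch (n + 1)) = Ring.inverse (poch n) := by
  have h1 := isUnit_poch n
  have h2 := isUnit_poch (n + 1)
  have h : poch n * ((1 - X ^ (n + 1)) * Ring.inverse (poch (n + 1)))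
      = poch n * Ring.inverse (poch n) := by
    rw [Ring.mul_inverse_cancel _ h1, ← mul_assoc, ← poch_succ,
      Ring.mul_inverse_cancel _ h2]
  exact h1.mul_left_cancel h

noncomputable def t (n : ℕ) : PowerSeries ℤ := X ^ (Nat.choose n 2) * Ring.inverse (poch n)

noncomputable def u (n : ℕ) : PowerSeries ℤ := X ^ (Nat.choose (n+1) 2) * Ring.inverse (poch n)

lemma choose_two_succ (n : ℕ) : Nat.choose (n + 1) 2 = Nat.choose n 2 + n := by
  rw [Nat.choose_succ_succ n 1, Nat.choose_one_right, Nat.add_comm]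

lemma choose_two_ge (n : ℕ) : n ≤ Nat.choose (n + 1) 2 := by
  rw [choose_two_succ]; omega

lemma telescope_alt (N : ℕ) :
    ∑ n ∈ range (N + 1), (-1 : PowerSeries ℤ) ^ n * t n
      = (-1) ^ N * (X ^ (Nat.choose (N + 1) 2) * Ring.inverse (poch N)) := by
  induction N with
  | zero => simp [t]
  | succ N ih =>
      rw [Finset.sum_range_succ, ih]
      simp only [t]
      rw [choose_two_succ (N + 1), ← inv_poch_succ N, pow_add]
      ring

lemma telescope_two (N : ℕ) :
    ∑ n ∈ range (N + 1), t n + X ^ (Nat.choose (N + 1) 2) * Ring.inverse (poch N)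
      = 2 * ∑ n ∈ range (N + 1), u n := by
  induction N with
  | zero => simp [t, u]; ring
  | succ N ih =>
      rw [Finset.sum_range_succ, Finset.sum_range_succ (f := u), mul_add, ← ih]
      simp only [t, u]
      rw [choose_two_succ (N + 1), ← inv_poch_succ N, pow_add]
      ring

lemma sum_range_even_odd (f : ℕ → PowerSeries ℤ) (M : ℕ) :
    ∑ n ∈ range (2 * M), f n
      = ∑ i ∈ range M, f (2 * i) + ∑ i ∈ range M, f (2 * i + 1) := by
  induction M with
  | zero => simp
  | succ M ih =>
      have h2 : 2 * (M + 1) = 2 * M + 1 + 1 := by ring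
      rw [h2, Finset.sum_range_succ, Finset.sum_range_succ, ih,
        Finset.sum_range_succ, Finset.sum_range_succ]
      ring

noncomputable def W (a b : ℕ) : PowerSeries ℤ := ∏ j ∈ Finset.Ico a b, (1 - X ^ j)

lemma W_self (a : ℕ) : W a a = 1 := by simp [W]

lemma W_zero (b : ℕ) (hb : 0 < b) : W 0 b = 0 := by
  apply Finset.prod_eq_zero (Finset.mem_Ico.mpr ⟨le_refl 0, hb⟩)
  simp

lemma pascal (n a : ℕ) (ha : a ≤ n) :
    W (a + 1) (n + 2) = W a (n + 1) + X ^ a * (1 - X ^ (n + 1 - a)) * W (a + 1) (n + 1) := by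
  have h3 : (X : PowerSeries ℤ) ^ a * X ^ (n + 1 - a) = X ^ (n + 1) := by
    rw [← pow_add]; congr 1; omega
  simp only [W]
  rw [Finset.prod_Ico_succ_top (by omega : a + 1 ≤ n + 1),
    Finset.prod_eq_prod_Ico_succ_bot (by omega : a < n + 1), ← h3]
  ring

lemma X_pow_dvd_prod_sub_one (c : ℕ) (s : Finset ℕ) :
    (∀ j ∈ s, c ≤ j) → (X : PowerSeries ℤ) ^ c ∣ (∏ j ∈ s, (1 - X ^ j)) - 1 := by
  classical
  induction s using Finset.induction_on with
  | empty => intro _; simp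
  | @insert a s ha ih =>
      intro h
      rw [Finset.prod_insert ha]
      have hdvd1 : (X : PowerSeries ℤ) ^ c ∣ X ^ a :=
        pow_dvd_pow _ (h a (Finset.mem_insert_self a s))
      have hdvd2 := ih fun j hj => h j (Finset.mem_insert_of_mem hj)
      have hre : (1 - X ^ a) * (∏ j ∈ s, (1 - (X : PowerSeries ℤ) ^ j)) - 1
          = (1 - X ^ a) * ((∏ j ∈ s, (1 - X ^ j)) - 1) - X ^ a := by ring
      rw [hre]
      exact dvd_sub (Dvd.dvd.mul_left hdvd2 _) hdvd1

lemma qbinom (n : ℕ) :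
    ∏ j ∈ range n, (1 + (X : PowerSeries ℤ) ^ (j + 1))
      = ∑ k ∈ range (n + 1),
          X ^ (Nat.choose (k + 1) 2) * W (n + 1 - k) (n + 1) * Ring.inverse (poch k) := by
  induction n with
  | zero => simp [W_self, poch, Ring.inverse_one]
  | succ n ih =>
      rw [Finset.prod_range_succ, ih]
      set g : ℕ → PowerSeries ℤ :=
        fun k => X ^ (Nat.choose (k + 1) 2) * W (n + 1 - k) (n + 1) * Ring.inverse (poch k)
        with hg
      have hsplit : ∀ k ∈ range (n + 1),
          X ^ (Nat.choose (k + 1 + 1) 2) * W (n + 1 + 1 - (k + 1)) (n + 1 + 1)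
              * Ring.inverse (poch (k + 1))
            = g (k + 1) + X ^ (n + 1) * g k := by
        intro k hk
        have hkn : k ≤ n := by
          have := Finset.mem_range.mp hk; omega
        have h1 : n + 1 + 1 - (k + 1) = (n - k) + 1 := by omega
        have h2 : n + 1 + 1 = n + 2 := rfl
        have h4 : n + 1 - (n - k) = k + 1 := by omega
        have h5 : n - k + 1 = n + 1 - k := by omega
        have hexp : (X : PowerSeries ℤ) ^ (Nat.choose (k + 1 + 1) 2) * X ^ (n - k)
            = X ^ (n + 1) * X ^ (Nat.choose (k + 1) 2) := by
          rw [← pow_add, ← pow_add, choose_two_succ (k + 1)]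
          congr 1; omega
        rw [h1, h2, pascal n (n - k) (by omega), h4, h5]
        simp only [hg, Nat.add_sub_add_right]
        have hip := inv_poch_succ k
        linear_combination
          (X ^ (Nat.choose (k + 1 + 1) 2) * X ^ (n - k) * W (n + 1 - k) (n + 1)) * hip
          + (W (n + 1 - k) (n + 1) * Ring.inverse (poch k)) * hexp
      rw [Finset.sum_range_succ' _ (n + 1), Finset.sum_congr rfl hsplit,
        Finset.sum_add_distrib, ← Finset.mul_sum]
      have hgsum : ∑ k ∈ range (n + 1), g (k + 1) + g 0 = ∑ k ∈ range (n + 1), g k := by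
        rw [← Finset.sum_range_succ' g (n + 1), Finset.sum_range_succ]
        have hzero : g (n + 1) = 0 := by
          simp [hg, Nat.sub_self, W_zero]
        rw [hzero, add_zero]
      have hg0 : g 0 = 1 := by
        simp [hg, W_self, poch, Ring.inverse_one]
      have hF0 : X ^ (Nat.choose (0 + 1) 2) * W (n + 1 + 1 - 0) (n + 1 + 1)
          * Ring.inverse (poch 0) = 1 := by
        simp [W_self, poch, Ring.inverse_one]
      rw [hF0]
      linear_combination -hgsum + hg0

lemma coeff_X_pow_mul_eq_zero {e m : ℕ} (h : m < e) (f : PowerSeries ℤ) :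
    PowerSeries.coeff m (X ^ e * f) = 0 :=
  PowerSeries.X_pow_dvd_iff.mp (dvd_mul_right _ _) m h

lemma coeff_u_zero {m n : ℕ} (h : m < n) : PowerSeries.coeff m (u n) = 0 :=
  coeff_X_pow_mul_eq_zero (lt_of_lt_of_le h (choose_two_ge n)) _

lemma coeff_rhs_eq (m : ℕ) :
    PowerSeries.coeff m rhs = PowerSeries.coeff m (∑ n ∈ range (m + 1), u n) := by
  have hterm : ∀ k ∈ range (m + 1 + 1),
      PowerSeries.coeff m (X ^ (Nat.choose (k + 1) 2) * W (m + 1 + 1 - k) (m + 1 + 1)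
        * Ring.inverse (poch k))
      = PowerSeries.coeff m (u k) := by
    intro k hk
    have hdvd : (X : PowerSeries ℤ) ^ (m + 1 + 1 - k) ∣ W (m + 1 + 1 - k) (m + 1 + 1) - 1 :=
      X_pow_dvd_prod_sub_one _ _ fun j hj => (Finset.mem_Ico.mp hj).1
    have hsub : X ^ (Nat.choose (k + 1) 2) * W (m + 1 + 1 - k) (m + 1 + 1) * Ring.inverse (poch k)
        - u k
        = X ^ (Nat.choose (k + 1) 2)
            * ((W (m + 1 + 1 - k) (m + 1 + 1) - 1) * Ring.inverse (poch k)) := by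
      simp only [u]; ring
    have hdvd2 : (X : PowerSeries ℤ) ^ (Nat.choose (k + 1) 2 + (m + 1 + 1 - k)) ∣
        X ^ (Nat.choose (k + 1) 2)
          * ((W (m + 1 + 1 - k) (m + 1 + 1) - 1) * Ring.inverse (poch k)) := by
      rw [pow_add]
      exact mul_dvd_mul_left _ (Dvd.dvd.mul_right hdvd _)
    have hk' : k < m + 1 + 1 := Finset.mem_range.mp hk
    have hlt : m < Nat.choose (k + 1) 2 + (m + 1 + 1 - k) := by
      have := choose_two_ge k; omega
    have h0 : PowerSeries.coeff m
        (X ^ (Nat.choose (k + 1) 2) * W (m + 1 + 1 - k) (m + 1 + 1) * Ring.inverse (poch k)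
          - u k) = 0 := by
      rw [hsub]; exact PowerSeries.X_pow_dvd_iff.mp hdvd2 m hlt
    rw [map_sub] at h0
    linarith
  rw [rhs, PowerSeries.coeff_mk, qbinom (m + 1), map_sum, Finset.sum_congr rfl hterm,
    ← map_sum, Finset.sum_range_succ, map_add, coeff_u_zero (by omega), add_zero]

lemma claimA (m : ℕ) :
    PowerSeries.coeff m (∑ i ∈ range (m + 1), t (2 * i))
      = PowerSeries.coeff m (∑ i ∈ range (m + 1), t (2 * i + 1)) := by
  have h := telescope_alt (2 * m + 1)
  have hsplit := sum_range_even_odd (fun n => (-1 : PowerSeries ℤ) ^ n * t n) (m + 1)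
  rw [show 2 * (m + 1) = 2 * m + 1 + 1 by ring] at hsplit
  rw [hsplit] at h
  have e1 : ∑ i ∈ range (m + 1), (-1 : PowerSeries ℤ) ^ (2 * i) * t (2 * i)
      = ∑ i ∈ range (m + 1), t (2 * i) :=
    Finset.sum_congr rfl fun i _ => by rw [pow_mul]; norm_num
  have e2 : ∑ i ∈ range (m + 1), (-1 : PowerSeries ℤ) ^ (2 * i + 1) * t (2 * i + 1)
      = -∑ i ∈ range (m + 1), t (2 * i + 1) := by
    rw [← Finset.sum_neg_distrib]
    exact Finset.sum_congr rfl fun i _ => by rw [pow_succ, pow_mul]; norm_num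
  have hsgn : ((-1 : PowerSeries ℤ)) ^ (2 * m + 1) = -1 := by
    rw [pow_succ, pow_mul]; norm_num
  rw [e1, e2, hsgn, neg_one_mul] at h
  have happ := congrArg (PowerSeries.coeff m) h
  have hco : PowerSeries.coeff m
      (X ^ (Nat.choose (2 * m + 1 + 1) 2) * Ring.inverse (poch (2 * m + 1))) = 0 :=
    coeff_X_pow_mul_eq_zero (by have := choose_two_ge (2 * m + 1); omega) _
  rw [map_add, map_neg, map_neg, hco] at happ
  linarith

lemma coeff_sum_t (δ : ℕ) (hδ : δ = 0 ∨ δ = 1) (m : ℕ) :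
    PowerSeries.coeff m (∑ i ∈ range (m + 1), t (2 * i + δ))
      = PowerSeries.coeff m (∑ n ∈ range (m + 1), u n) := by
  have hB := telescope_two (2 * m + 1)
  have hsplit := sum_range_even_odd t (m + 1)
  rw [show 2 * (m + 1) = 2 * m + 1 + 1 by ring] at hsplit
  rw [hsplit, two_mul (∑ n ∈ range (2 * m + 1 + 1), u n)] at hB
  have htrunc : PowerSeries.coeff m (∑ n ∈ range (2 * m + 1 + 1), u n)
      = PowerSeries.coeff m (∑ n ∈ range (m + 1), u n) := by
    have hsplit2 : ∑ n ∈ range (2 * m + 1 + 1), u n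
        = ∑ n ∈ range (m + 1), u n + ∑ n ∈ Finset.Ico (m + 1) (2 * m + 1 + 1), u n := by
      rw [Finset.range_eq_Ico,
        ← Finset.sum_Ico_consecutive u (by omega : 0 ≤ m + 1) (by omega : m + 1 ≤ 2 * m + 1 + 1),
        ← Finset.range_eq_Ico]
    rw [hsplit2, map_add]
    have hz : PowerSeries.coeff m (∑ n ∈ Finset.Ico (m + 1) (2 * m + 1 + 1), u n) = 0 := by
      rw [map_sum]
      exact Finset.sum_eq_zero fun n hn =>
        coeff_u_zero (by have := (Finset.mem_Ico.mp hn).1; omega)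
    rw [hz, add_zero]
  have hco : PowerSeries.coeff m
      (X ^ (Nat.choose (2 * m + 1 + 1) 2) * Ring.inverse (poch (2 * m + 1))) = 0 :=
    coeff_X_pow_mul_eq_zero (by have := choose_two_ge (2 * m + 1); omega) _
  have happ := congrArg (PowerSeries.coeff m) hB
  rw [map_add, map_add, map_add, hco, add_zero, htrunc] at happ
  have hA := claimA m
  rcases hδ with h | h <;> subst h
  · simp only [Nat.add_zero]
    linarith
  · linarith

/-- For each `δ ∈ {0,1}`, `∑_{i ≥ 0} q^{binom(2i+δ,2)} / (q;q)_{2i+δ} = (−q;q)_∞` in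
`ℤ[[q]]`. -/
theorem statement19 (δ : ℕ) (hδ : δ = 0 ∨ δ = 1) : lhs δ = rhs := by
  ext m
  have h1 : PowerSeries.coeff m (lhs δ)
      = PowerSeries.coeff m (∑ i ∈ range (m + 1), t (2 * i + δ)) := by
    simp only [lhs, PowerSeries.coeff_mk, t]
  rw [h1, coeff_sum_t δ hδ m, ← coeff_rhs_eq m]

end EulerSum
end
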